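/- arXiv:2407.05894 — 3 statements merged into one kernel-verified Lean document; each statement's English description precedes it below -/
import Mathlib

section
/- Let f be a nonnegative weight with moments u_0,…,u_{2n+1}, with G_{n−1} and G_n invertible. Define p_n(c) = c^n − (1,…,c^{n−1}) G_{n−1}^{−1} u_{n,2n−1} and p_{n+1}(c) = c^{n+1} − (1,…,c^n) G_n^{−1} u_{n+1,2n+1}, and set σ_{n,n} = u_{2n} − u_{n,2n−1}^T G_{n−1}^{−1} u_{n,2n−1} and σ_{n,n+1} = u_{2n+1} − u_{n+1,2n}^T G_{n−1}^{−1} u_{n,2n−1}. Then p_{n+1}(c) = c^{n+1} − (1,…,c^{n−1}) G_{n−1}^{−1} u_{n+1,2n} − (σ_{n,n+1}/σ_{n,n}) p_n(c). -/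
open MeasureTheory Matrix

theorem stmt_5 (n : ℕ) (hn : 0 < n) (f : ℝ → ℝ) (hf : ∀ c, 0 ≤ f c)
    (hmom : ∀ k ≤ 2 * n + 1, Integrable (fun c => c ^ k * f c))
    (u : ℕ → ℝ) (hu : ∀ k, u k = ∫ c, c ^ k * f c)
    (G1 : Matrix (Fin n) (Fin n) ℝ) (hG1 : ∀ i j, G1 i j = u ((i : ℕ) + (j : ℕ)))
    (hG1inv : IsUnit G1.det)
    (G : Matrix (Fin (n + 1)) (Fin (n + 1)) ℝ) (hGm : ∀ i j, G i j = u ((i : ℕ) + (j : ℕ)))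
    (hGinv : IsUnit G.det)
    (p pp : ℝ → ℝ)
    (hp : ∀ c, p c = c ^ n -
      ∑ i : Fin n, c ^ (i : ℕ) * (G1⁻¹ *ᵥ fun i : Fin n => u (n + (i : ℕ))) i)
    (hpp : ∀ c, pp c = c ^ (n + 1) -
      ∑ i : Fin (n + 1), c ^ (i : ℕ) * (G⁻¹ *ᵥ fun i : Fin (n + 1) => u (n + 1 + (i : ℕ))) i)
    (σnn σnn1 : ℝ)
    (hσnn : σnn = u (2 * n) -
      (fun i : Fin n => u (n + (i : ℕ))) ⬝ᵥ (G1⁻¹ *ᵥ fun i : Fin n => u (n + (i : ℕ))))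
    (hσnn1 : σnn1 = u (2 * n + 1) -
      (fun i : Fin n => u (n + 1 + (i : ℕ))) ⬝ᵥ (G1⁻¹ *ᵥ fun i : Fin n => u (n + (i : ℕ))))
    (hσ : σnn ≠ 0) :
    ∀ c, pp c = c ^ (n + 1) -
      (∑ i : Fin n, c ^ (i : ℕ) * (G1⁻¹ *ᵥ fun i : Fin n => u (n + 1 + (i : ℕ))) i) -
      (σnn1 / σnn) * p c := by
  intro c
  set v : Fin n → ℝ := fun i => u (n + (i : ℕ)) with hv
  set w1 : Fin n → ℝ := fun i => u (n + 1 + (i : ℕ)) with hw1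
  set y : Fin n → ℝ := G1⁻¹ *ᵥ w1 with hy
  set z : Fin n → ℝ := G1⁻¹ *ᵥ v with hz
  set t : ℝ := σnn1 / σnn with ht
  have hG1sym : G1ᵀ = G1 := by
    ext i j; simp [Matrix.transpose_apply, hG1, Nat.add_comm]
  have hmul1 : ∀ a : Fin n → ℝ, G1 *ᵥ (G1⁻¹ *ᵥ a) = a := by
    intro a
    rw [Matrix.mulVec_mulVec, Matrix.mul_nonsing_inv _ hG1inv, Matrix.one_mulVec]
  have hswap : v ⬝ᵥ y = w1 ⬝ᵥ z := by
    rw [hy, hz, Matrix.dotProduct_mulVec, ← Matrix.mulVec_transpose,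
      Matrix.transpose_nonsing_inv, hG1sym, dotProduct_comm]
  set x : Fin (n + 1) → ℝ := Fin.snoc (fun j => y j - t * z j) t with hx
  have htσ : t * σnn = σnn1 := div_mul_cancel₀ _ hσ
  have hvz : v ⬝ᵥ z = u (2 * n) - σnn := by rw [hσnn]; ring
  have hw1z : w1 ⬝ᵥ z = u (2 * n + 1) - σnn1 := by rw [hσnn1]; ring
  have hGx : G *ᵥ x = Fin.snoc w1 (u (2 * n + 1)) := by
    funext i
    have hexp : (G *ᵥ x) i =
        (∑ j : Fin n, u ((i : ℕ) + (j : ℕ)) * (y j - t * z j)) + u ((i : ℕ) + n) * t := by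
      rw [Matrix.mulVec, dotProduct, Fin.sum_univ_castSucc]
      simp [hx, hGm]
    induction i using Fin.lastCases with
    | last =>
      have h1 : ∑ j : Fin n, u (n + (j : ℕ)) * (y j - t * z j)
          = v ⬝ᵥ y - t * (v ⬝ᵥ z) := by
        simp only [dotProduct, hv, Finset.mul_sum]
        rw [← Finset.sum_sub_distrib]
        congr 1; funext j; ring
      rw [hexp]
      simp only [Fin.val_last, Fin.snoc_last, h1, hswap, hw1z, hvz]
      have h2n : n + n = 2 * n := by ring
      rw [h2n]
      nlinarith [htσ]
    | cast k =>
      have hy' : ∑ j : Fin n, u ((k : ℕ) + (j : ℕ)) * y j = w1 k := by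
        have := congrFun (hmul1 w1) k
        rw [← hy] at this
        simpa [Matrix.mulVec, dotProduct, hG1] using this
      have hz' : ∑ j : Fin n, u ((k : ℕ) + (j : ℕ)) * z j = v k := by
        have := congrFun (hmul1 v) k
        rw [← hz] at this
        simpa [Matrix.mulVec, dotProduct, hG1] using this
      rw [hexp]
      have hsplit : ∑ j : Fin n, u ((k : ℕ) + (j : ℕ)) * (y j - t * z j)
          = (∑ j : Fin n, u ((k : ℕ) + (j : ℕ)) * y j)
            - t * ∑ j : Fin n, u ((k : ℕ) + (j : ℕ)) * z j := by
        rw [Finset.mul_sum, ← Finset.sum_sub_distrib]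
        congr 1; funext j; ring
      simp only [Fin.coe_castSucc, Fin.snoc_castSucc, hsplit, hy', hz']
      simp only [hw1, hv]
      have : (k : ℕ) + n = n + (k : ℕ) := by ring
      rw [this]; ring
  have hxval : G⁻¹ *ᵥ (fun i : Fin (n + 1) => u (n + 1 + (i : ℕ))) = x := by
    have hwid : (fun i : Fin (n + 1) => u (n + 1 + (i : ℕ))) = Fin.snoc w1 (u (2 * n + 1)) := by
      funext i
      induction i using Fin.lastCases with
      | last => simp [hw1]; congr 1; ring
      | cast k => simp [hw1]
    rw [hwid, ← hGx, Matrix.mulVec_mulVec, Matrix.nonsing_inv_mul _ hGinv,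
      Matrix.one_mulVec]
  rw [hpp, hxval, Fin.sum_univ_castSucc]
  simp only [hx, Fin.snoc_castSucc, Fin.snoc_last, Fin.coe_castSucc, Fin.val_last]
  rw [hp]
  have hsplit2 : ∑ i : Fin n, c ^ (i : ℕ) * (y i - t * z i)
      = (∑ i : Fin n, c ^ (i : ℕ) * y i) - t * ∑ i : Fin n, c ^ (i : ℕ) * z i := by
    rw [Finset.mul_sum, ← Finset.sum_sub_distrib]
    congr 1; funext j; ring
  rw [hsplit2]; ring
end

section
/- Under the Gramian closure u_{2n+1} = u_{n+1,2n}^T G_{n−1}^{−1} u_{n,2n−1} (with G_{n−1} invertible), the product of the monic orthogonal polynomials satisfies p_n(c) · p_{n+1}(c) = c^{2n+1} − Σ_{k=0}^{2n} (∂C/∂u_k) c^k, where C(u_0,…,u_{2n}) = u_{n+1,2n}^T G_{n−1}^{−1} u_{n,2n−1} and p_{n+1} is computed using the closed moment u_{2n+1} = C(u_0,…,u_{2n}). -/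
open Matrix

abbrev idx1 (n : ℕ) (i : Fin n) : Fin (2 * n + 1) := ⟨n + 1 + (i : ℕ), (by have := i.2; omega : n + 1 + (i : ℕ) < 2 * n + 1 + 0)⟩
abbrev idx0 (n : ℕ) (i : Fin n) : Fin (2 * n + 1) := ⟨n + (i : ℕ), (by have := i.2; omega : n + (i : ℕ) < 2 * n + 1 + 0)⟩
abbrev idx2 (n : ℕ) (i j : Fin n) : Fin (2 * n + 1) :=
  ⟨(i : ℕ) + (j : ℕ), (by have := i.2; have := j.2; omega : (i : ℕ) + (j : ℕ) < 2 * n + 1 + 0)⟩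

@[simp] lemma idx1_val (n : ℕ) (i : Fin n) : ((idx1 n i : Fin (2*n+1)) : ℕ) = n + 1 + i := rfl
@[simp] lemma idx0_val (n : ℕ) (i : Fin n) : ((idx0 n i : Fin (2*n+1)) : ℕ) = n + i := rfl
@[simp] lemma idx2_val (n : ℕ) (i j : Fin n) : ((idx2 n i j : Fin (2*n+1)) : ℕ) = i + j := rfl

def mmap (n : ℕ) : (Fin (2 * n + 1) → ℝ) →ₗ[ℝ] Matrix (Fin n) (Fin n) ℝ where
  toFun w := Matrix.of fun i j => w (idx2 n i j)
  map_add' w v := by ext i j; simp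
  map_smul' c w := by ext i j; simp

@[simp] lemma mmap_apply (n : ℕ) (w : Fin (2*n+1) → ℝ) (i j : Fin n) :
    mmap n w i j = w (idx2 n i j) := rfl

def entryLM (n : ℕ) (i j : Fin n) : Matrix (Fin n) (Fin n) ℝ →ₗ[ℝ] ℝ where
  toFun A := A i j
  map_add' _ _ := rfl
  map_smul' _ _ := rfl

@[simp] lemma entryLM_apply (n : ℕ) (i j : Fin n) (A : Matrix (Fin n) (Fin n) ℝ) :
    entryLM n i j A = A i j := rfl

def projLM (n : ℕ) (k : Fin (2 * n + 1)) : (Fin (2 * n + 1) → ℝ) →ₗ[ℝ] ℝ where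
  toFun w := w k
  map_add' _ _ := rfl
  map_smul' _ _ := rfl

@[simp] lemma projLM_apply (n : ℕ) (k : Fin (2 * n + 1)) (w : Fin (2 * n + 1) → ℝ) :
    projLM n k w = w k := rfl

theorem stmt_6 (n : ℕ) (hn : 0 < n)
    (Cl : (Fin (2 * n + 1) → ℝ) → ℝ)
    (hCl : ∀ w : Fin (2 * n + 1) → ℝ, Cl w =
      (fun i : Fin n => w ⟨n + 1 + (i : ℕ), by have := i.2; omega⟩) ⬝ᵥ
        ((Matrix.of fun i j : Fin n =>
            w ⟨(i : ℕ) + (j : ℕ), by have := i.2; have := j.2; omega⟩)⁻¹ *ᵥ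
          fun i : Fin n => w ⟨n + (i : ℕ), by have := i.2; omega⟩))
    (u : Fin (2 * n + 1) → ℝ)
    (G : Matrix (Fin n) (Fin n) ℝ)
    (hG : ∀ i j : Fin n, G i j = u ⟨(i : ℕ) + (j : ℕ), by have := i.2; have := j.2; omega⟩)
    (hGinv : IsUnit G.det)
    (p pp : ℝ → ℝ)
    (hp : ∀ c, p c = c ^ n - ∑ i : Fin n, c ^ (i : ℕ) *
      (G⁻¹ *ᵥ fun i : Fin n => u ⟨n + (i : ℕ), by have := i.2; omega⟩) i)
    (hpp : ∀ c, pp c = c ^ (n + 1) - ∑ i : Fin n, c ^ (i : ℕ) *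
      (G⁻¹ *ᵥ fun i : Fin n => u ⟨n + 1 + (i : ℕ), by have := i.2; omega⟩) i) :
    ∀ c, p c * pp c = c ^ (2 * n + 1) -
      ∑ k : Fin (2 * n + 1), (fderiv ℝ Cl u) (Pi.single k 1) * c ^ (k : ℕ) := by
  classical
  letI : SeminormedRing (Matrix (Fin n) (Fin n) ℝ) := Matrix.linftyOpSemiNormedRing
  letI : NormedRing (Matrix (Fin n) (Fin n) ℝ) := Matrix.linftyOpNormedRing
  letI : NormedAlgebra ℝ (Matrix (Fin n) (Fin n) ℝ) := Matrix.linftyOpNormedAlgebra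
  letI : CompleteSpace (Matrix (Fin n) (Fin n) ℝ) := FiniteDimensional.complete ℝ _
  set Mc : (Fin (2 * n + 1) → ℝ) →L[ℝ] Matrix (Fin n) (Fin n) ℝ :=
    (mmap n).toContinuousLinearMap with hMc
  set Ev : Fin n → Fin n → (Matrix (Fin n) (Fin n) ℝ →L[ℝ] ℝ) := fun i j =>
    (entryLM n i j).toContinuousLinearMap with hEv
  have hGu : IsUnit G := (Matrix.isUnit_iff_isUnit_det G).mpr hGinv
  obtain ⟨Gu, hGu'⟩ := hGu
  have hMcu : Mc u = G := by ext i j; rw [hG]; rfl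
  have hinv0 : HasFDerivAt (Ring.inverse : Matrix (Fin n) (Fin n) ℝ → _)
      (-(ContinuousLinearMap.mulLeftRight ℝ (Matrix (Fin n) (Fin n) ℝ) G⁻¹ G⁻¹)) G := by
    have h := hasFDerivAt_ringInverse (𝕜 := ℝ) Gu
    rw [Matrix.coe_units_inv, hGu'] at h
    exact h
  set D : (Fin (2 * n + 1) → ℝ) →L[ℝ] Matrix (Fin n) (Fin n) ℝ :=
    (((-(ContinuousLinearMap.mulLeftRight ℝ (Matrix (Fin n) (Fin n) ℝ) G⁻¹ G⁻¹)) :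
        Matrix (Fin n) (Fin n) ℝ →L[ℝ] Matrix (Fin n) (Fin n) ℝ).comp Mc) with hDdef
  have hN : HasFDerivAt
      (fun w : Fin (2 * n + 1) → ℝ => Ring.inverse (Mc w) : _ → Matrix (Fin n) (Fin n) ℝ)
      D u := by
    have hinv0' : HasFDerivAt (Ring.inverse : Matrix (Fin n) (Fin n) ℝ → _)
        (-(ContinuousLinearMap.mulLeftRight ℝ (Matrix (Fin n) (Fin n) ℝ) G⁻¹ G⁻¹)) (Mc u) := by
      rw [hMcu]; exact hinv0
    exact hinv0'.comp u (Mc.hasFDerivAt (x := u))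
  -- rewrite Cl
  have hCl' : Cl = fun w => ∑ i : Fin n, ∑ j : Fin n,
      w (idx1 n i) * (Ring.inverse (Mc w) i j * w (idx0 n j)) := by
    funext w
    rw [hCl w]
    have hM : (Matrix.of fun i j : Fin n =>
        w ⟨(i : ℕ) + (j : ℕ), by have := i.2; have := j.2; omega⟩) = Mc w := rfl
    rw [hM, Matrix.nonsing_inv_eq_ringInverse]
    simp only [dotProduct, Matrix.mulVec, Finset.mul_sum]
  subst hCl'
  set P : Fin (2 * n + 1) → ((Fin (2 * n + 1) → ℝ) →L[ℝ] ℝ) := fun k =>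
    (projLM n k).toContinuousLinearMap with hP
  set F : Fin n → Fin n → ((Fin (2 * n + 1) → ℝ) →L[ℝ] ℝ) := fun i j =>
    u (idx1 n i) • (Ring.inverse (Mc u) i j • P (idx0 n j)
        + u (idx0 n j) • ((Ev i j).comp D))
      + (Ring.inverse (Mc u) i j * u (idx0 n j)) • P (idx1 n i) with hF
  have hterm : ∀ i j : Fin n,
      HasFDerivAt (fun w : Fin (2 * n + 1) → ℝ =>
        w (idx1 n i) * (Ring.inverse (Mc w) i j * w (idx0 n j))) (F i j) u := by
    intro i j
    have hproj1 : HasFDerivAt (fun w : Fin (2 * n + 1) → ℝ => w (idx1 n i))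
        (P (idx1 n i)) u := (P (idx1 n i)).hasFDerivAt
    have hproj0 : HasFDerivAt (fun w : Fin (2 * n + 1) → ℝ => w (idx0 n j))
        (P (idx0 n j)) u := (P (idx0 n j)).hasFDerivAt
    have hent : HasFDerivAt (fun w : Fin (2 * n + 1) → ℝ => Ring.inverse (Mc w) i j)
        ((Ev i j).comp D) u := (Ev i j).hasFDerivAt.comp u hN
    exact hproj1.mul (hent.mul hproj0)
  have hC : HasFDerivAt (fun w => ∑ i : Fin n, ∑ j : Fin n,
      w (idx1 n i) * (Ring.inverse (Mc w) i j * w (idx0 n j)))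
      (∑ i : Fin n, ∑ j : Fin n, F i j) u := by
    exact HasFDerivAt.fun_sum fun i _ => HasFDerivAt.fun_sum fun j _ => hterm i j
  have hfd := hC.fderiv
  intro c
  rw [hp c, hpp c, hfd]
  -- linearity: sum over singles = value at the power vector
  have hLc : (∑ i : Fin n, ∑ j : Fin n, F i j) (fun m : Fin (2*n+1) => c ^ (m : ℕ))
      = ∑ k : Fin (2*n+1),
          (∑ i : Fin n, ∑ j : Fin n, F i j) (Pi.single k 1) * c ^ (k : ℕ) := by
    have h1 : (fun m : Fin (2*n+1) => c ^ (m : ℕ))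
        = ∑ k : Fin (2*n+1), Pi.single k (c ^ (k : ℕ)) := by
      rw [Finset.univ_sum_single fun m : Fin (2*n+1) => c ^ (m : ℕ)]
    rw [h1, map_sum]
    refine Finset.sum_congr rfl fun k _ => ?_
    have h2 : Pi.single k (c ^ (k : ℕ)) = c ^ (k : ℕ) • (Pi.single k 1 : Fin (2*n+1) → ℝ) := by
      funext m
      simp [Pi.single_apply]
    rw [h2, _root_.map_smul, smul_eq_mul, mul_comm]
  rw [← hLc]
  -- compute the value at the power vector
  have hNu : Ring.inverse (Mc u) = G⁻¹ := by
    rw [hMcu, Matrix.nonsing_inv_eq_ringInverse]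
  have hGsym : Gᵀ = G := by
    ext i j
    rw [Matrix.transpose_apply, hG, hG]
    exact congrArg u (Fin.ext (Nat.add_comm _ _))
  have hsym : ∀ i j : Fin n, G⁻¹ i j = G⁻¹ j i := by
    intro i j
    have h : (G⁻¹)ᵀ = G⁻¹ := by rw [Matrix.transpose_nonsing_inv, hGsym]
    calc G⁻¹ i j = (G⁻¹)ᵀ j i := rfl
    _ = G⁻¹ j i := by rw [h]
  have hMcc : Mc (fun m : Fin (2*n+1) => c ^ (m : ℕ))
      = Matrix.of (fun t s : Fin n => c ^ (t : ℕ) * c ^ (s : ℕ)) := by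
    ext t s
    show c ^ ((t : ℕ) + (s : ℕ)) = c ^ (t : ℕ) * c ^ (s : ℕ)
    rw [pow_add]
  have hmid : ∀ i j : Fin n,
      (G⁻¹ * Mc (fun m : Fin (2*n+1) => c ^ (m : ℕ)) * G⁻¹) i j
      = (∑ t : Fin n, G⁻¹ i t * c ^ (t : ℕ)) * (∑ s : Fin n, c ^ (s : ℕ) * G⁻¹ s j) := by
    intro i j
    rw [hMcc, Finset.sum_mul_sum]
    simp only [Matrix.mul_apply, Matrix.of_apply, Finset.sum_mul]
    rw [Finset.sum_comm]
    refine Finset.sum_congr rfl fun t _ => Finset.sum_congr rfl fun s _ => ?_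
    ring
  have hFc : ∀ i j : Fin n, F i j (fun m : Fin (2*n+1) => c ^ (m : ℕ))
      = u (idx1 n i) * (G⁻¹ i j * c ^ (n + (j : ℕ)))
        - u (idx1 n i) * u (idx0 n j) *
            ((∑ t : Fin n, G⁻¹ i t * c ^ (t : ℕ)) * (∑ s : Fin n, c ^ (s : ℕ) * G⁻¹ s j))
        + G⁻¹ i j * u (idx0 n j) * c ^ (n + 1 + (i : ℕ)) := by
    intro i j
    simp only [hF, ContinuousLinearMap.add_apply, ContinuousLinearMap.smul_apply,
      ContinuousLinearMap.comp_apply, hNu, smul_eq_mul, hP,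
      hEv, LinearMap.coe_toContinuousLinearMap', entryLM_apply, projLM_apply, hDdef,
      ContinuousLinearMap.neg_apply, ContinuousLinearMap.mulLeftRight_apply,
      Matrix.neg_apply, idx1_val, idx0_val]
    erw [ContinuousLinearMap.comp_apply, ContinuousLinearMap.comp_apply]
    simp only [LinearMap.coe_toContinuousLinearMap', entryLM_apply,
      ContinuousLinearMap.neg_apply, ContinuousLinearMap.mulLeftRight_apply, Matrix.neg_apply]
    erw [hmid i j]
    ring
  simp only [ContinuousLinearMap.sum_apply]
  rw [Finset.sum_congr rfl fun i _ => Finset.sum_congr rfl fun j _ => hFc i j]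
  -- split into three sums
  have hsplit : ∑ i : Fin n, ∑ j : Fin n,
      (u (idx1 n i) * (G⁻¹ i j * c ^ (n + (j : ℕ)))
        - u (idx1 n i) * u (idx0 n j) *
            ((∑ t : Fin n, G⁻¹ i t * c ^ (t : ℕ)) * (∑ s : Fin n, c ^ (s : ℕ) * G⁻¹ s j))
        + G⁻¹ i j * u (idx0 n j) * c ^ (n + 1 + (i : ℕ)))
      = (∑ i : Fin n, ∑ j : Fin n, u (idx1 n i) * (G⁻¹ i j * c ^ (n + (j : ℕ))))
        - (∑ i : Fin n, u (idx1 n i) * (∑ t : Fin n, G⁻¹ i t * c ^ (t : ℕ))) *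
            (∑ j : Fin n, u (idx0 n j) * (∑ s : Fin n, c ^ (s : ℕ) * G⁻¹ s j))
        + (∑ i : Fin n, ∑ j : Fin n, G⁻¹ i j * u (idx0 n j) * c ^ (n + 1 + (i : ℕ))) := by
    conv_rhs => rw [Finset.sum_mul_sum]
    simp only [Finset.sum_add_distrib, Finset.sum_sub_distrib]
    congr 1
    congr 1
    refine Finset.sum_congr rfl fun i _ => Finset.sum_congr rfl fun j _ => ?_
    ring
  rw [hsplit]
  -- identify the three pieces
  have hB : ∑ i : Fin n, u (idx1 n i) * (∑ t : Fin n, G⁻¹ i t * c ^ (t : ℕ))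
      = ∑ i : Fin n, c ^ (i : ℕ) *
          (G⁻¹ *ᵥ fun t : Fin n => u (idx1 n t)) i := by
    simp only [Matrix.mulVec, dotProduct, Finset.mul_sum]
    rw [Finset.sum_comm]
    refine Finset.sum_congr rfl fun t _ => Finset.sum_congr rfl fun i _ => ?_
    rw [hsym i t]; ring
  have hA : ∑ j : Fin n, u (idx0 n j) * (∑ s : Fin n, c ^ (s : ℕ) * G⁻¹ s j)
      = ∑ i : Fin n, c ^ (i : ℕ) *
          (G⁻¹ *ᵥ fun t : Fin n => u (idx0 n t)) i := by
    simp only [Matrix.mulVec, dotProduct, Finset.mul_sum]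
    rw [Finset.sum_comm]
    refine Finset.sum_congr rfl fun s _ => Finset.sum_congr rfl fun j _ => ?_
    ring
  have h1 : ∑ i : Fin n, ∑ j : Fin n, u (idx1 n i) * (G⁻¹ i j * c ^ (n + (j : ℕ)))
      = c ^ n * ∑ i : Fin n, c ^ (i : ℕ) *
          (G⁻¹ *ᵥ fun t : Fin n => u (idx1 n t)) i := by
    rw [Finset.mul_sum, Finset.sum_comm]
    refine Finset.sum_congr rfl fun j _ => ?_
    simp only [Matrix.mulVec, dotProduct, Finset.mul_sum]
    refine Finset.sum_congr rfl fun i _ => ?_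
    rw [hsym i j, pow_add]; ring
  have h3 : ∑ i : Fin n, ∑ j : Fin n, G⁻¹ i j * u (idx0 n j) * c ^ (n + 1 + (i : ℕ))
      = c ^ (n + 1) * ∑ i : Fin n, c ^ (i : ℕ) *
          (G⁻¹ *ᵥ fun t : Fin n => u (idx0 n t)) i := by
    rw [Finset.mul_sum]
    refine Finset.sum_congr rfl fun i _ => ?_
    simp only [Matrix.mulVec, dotProduct, Finset.mul_sum]
    refine Finset.sum_congr rfl fun j _ => ?_
    rw [pow_add]; ring
  rw [hB, hA, h1, h3]
  ring
end

section
/- (Cauchy interlacing for bordered symmetric matrices) Let A = [[B, b],[b^T, c]] ∈ ℝ^{n×n} be symmetric, where B ∈ ℝ^{(n−1)×(n−1)} is symmetric with distinct eigenvalues λ_1 < λ_2 < … < λ_{n−1}, and no eigenvector of B is orthogonal to b ∈ ℝ^{n−1}. Then the eigenvalues μ_1 ≤ … ≤ μ_n of A satisfy strict interlacing: μ_1 < λ_1 < μ_2 < … < μ_{n−1} < λ_{n−1} < μ_n. -/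
open Matrix Filter Set Topology

noncomputable def secular {n : ℕ} (c : ℝ) (lam β : Fin n → ℝ) (μ : ℝ) : ℝ :=
  c - μ + ∑ k, β k ^ 2 / (μ - lam k)

lemma secular_continuousOn {n : ℕ} (c : ℝ) (lam β : Fin n → ℝ) :
    ContinuousOn (secular c lam β) {μ | ∀ k, μ ≠ lam k} := by
  unfold secular
  apply ContinuousOn.add
  · exact (continuous_const.sub continuous_id).continuousOn
  · apply continuousOn_finset_sum
    intro k _
    apply ContinuousOn.div continuousOn_const
    · exact (continuous_id.sub continuous_const).continuousOn
    · intro μ hμ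
      exact sub_ne_zero_of_ne (hμ k)

lemma tendsto_add_nhds_atTop {f g : ℝ → ℝ} {l : Filter ℝ} {C : ℝ}
    (hf : Tendsto f l (𝓝 C)) (hg : Tendsto g l atTop) :
    Tendsto (fun x => f x + g x) l atTop :=
  tendsto_atTop_add_left_of_le' l (C - 1) (hf.eventually (eventually_ge_nhds (by linarith))) hg

lemma tendsto_add_nhds_atBot {f g : ℝ → ℝ} {l : Filter ℝ} {C : ℝ}
    (hf : Tendsto f l (𝓝 C)) (hg : Tendsto g l atBot) :
    Tendsto (fun x => f x + g x) l atBot :=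
  tendsto_atBot_add_left_of_ge' l (C + 1) (hf.eventually (eventually_le_nhds (by linarith))) hg

lemma secular_rest_tendsto {n : ℕ} (c : ℝ) (lam β : Fin n → ℝ) (hinj : Function.Injective lam)
    (i : Fin n) (l : Filter ℝ) (hl : l ≤ 𝓝 (lam i)) :
    ∃ C, Tendsto (fun μ => c - μ + ∑ k ∈ Finset.univ.erase i, β k ^ 2 / (μ - lam k)) l (𝓝 C) := by
  refine ⟨c - lam i + ∑ k ∈ Finset.univ.erase i, β k ^ 2 / (lam i - lam k), Tendsto.mono_left ?_ hl⟩
  apply Tendsto.add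
  · exact (continuous_const.sub continuous_id).tendsto (lam i)
  · apply tendsto_finset_sum
    intro k hk
    refine Tendsto.div tendsto_const_nhds ((continuous_id.sub continuous_const).tendsto (lam i)) ?_
    refine sub_ne_zero_of_ne fun h => ?_
    exact (Finset.ne_of_mem_erase hk) (hinj h.symm)

lemma tendsto_atTop_add_nhds {f g : ℝ → ℝ} {l : Filter ℝ} {C : ℝ}
    (hf : Tendsto f l atTop) (hg : Tendsto g l (𝓝 C)) :
    Tendsto (fun x => f x + g x) l atTop :=
  tendsto_atTop_add_right_of_le' l (C - 1) hf (hg.eventually (eventually_ge_nhds (by linarith)))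

lemma tendsto_atBot_add_nhds {f g : ℝ → ℝ} {l : Filter ℝ} {C : ℝ}
    (hf : Tendsto f l atBot) (hg : Tendsto g l (𝓝 C)) :
    Tendsto (fun x => f x + g x) l atBot :=
  tendsto_atBot_add_right_of_ge' l (C + 1) hf (hg.eventually (eventually_le_nhds (by linarith)))

lemma secular_eq_rest {n : ℕ} (c : ℝ) (lam β : Fin n → ℝ) (i : Fin n) (μ : ℝ) :
    secular c lam β μ
      = (c - μ + ∑ k ∈ Finset.univ.erase i, β k ^ 2 / (μ - lam k)) + β i ^ 2 / (μ - lam i) := by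
  unfold secular
  rw [add_assoc, Finset.sum_erase_add _ _ (Finset.mem_univ i)]

lemma secular_tendsto_right {n : ℕ} (c : ℝ) (lam β : Fin n → ℝ)
    (hinj : Function.Injective lam) (i : Fin n) (hβ : β i ≠ 0) :
    Tendsto (secular c lam β) (𝓝[>] (lam i)) atTop := by
  obtain ⟨C, hC⟩ := secular_rest_tendsto c lam β hinj i _ nhdsWithin_le_nhds
  have h1 : Tendsto (fun μ => μ - lam i) (𝓝[>] (lam i)) (𝓝[>] 0) := by
    rw [tendsto_nhdsWithin_iff]
    constructor
    · have h0 : Tendsto (fun μ : ℝ => μ - lam i) (𝓝 (lam i)) (𝓝 (lam i - lam i)) :=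
        (continuous_id.sub continuous_const).tendsto (lam i)
      rw [sub_self] at h0
      exact h0.mono_left nhdsWithin_le_nhds
    · filter_upwards [self_mem_nhdsWithin] with x hx
      exact sub_pos.mpr (Set.mem_Ioi.mp hx)
  have h2 := h1.inv_tendsto_nhdsGT_zero
  have h3 : Tendsto (fun μ => β i ^ 2 * (μ - lam i)⁻¹) (𝓝[>] (lam i)) atTop :=
    Tendsto.const_mul_atTop (by positivity) h2
  have := tendsto_atTop_add_nhds h3 hC
  refine this.congr fun μ => ?_
  rw [secular_eq_rest c lam β i μ, div_eq_mul_inv]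
  ring

lemma secular_tendsto_left {n : ℕ} (c : ℝ) (lam β : Fin n → ℝ)
    (hinj : Function.Injective lam) (i : Fin n) (hβ : β i ≠ 0) :
    Tendsto (secular c lam β) (𝓝[<] (lam i)) atBot := by
  obtain ⟨C, hC⟩ := secular_rest_tendsto c lam β hinj i _ nhdsWithin_le_nhds
  have h1 : Tendsto (fun μ => lam i - μ) (𝓝[<] (lam i)) (𝓝[>] 0) := by
    rw [tendsto_nhdsWithin_iff]
    constructor
    · have h0 : Tendsto (fun μ : ℝ => lam i - μ) (𝓝 (lam i)) (𝓝 (lam i - lam i)) :=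
        (continuous_const.sub continuous_id).tendsto (lam i)
      rw [sub_self] at h0
      exact h0.mono_left nhdsWithin_le_nhds
    · filter_upwards [self_mem_nhdsWithin] with x hx
      exact sub_pos.mpr (Set.mem_Iio.mp hx)
  have h2 := h1.inv_tendsto_nhdsGT_zero
  have h3 : Tendsto (fun μ => β i ^ 2 * (lam i - μ)⁻¹) (𝓝[<] (lam i)) atTop :=
    Tendsto.const_mul_atTop (by positivity) h2
  have h4 : Tendsto (fun μ => -(β i ^ 2 * (lam i - μ)⁻¹)) (𝓝[<] (lam i)) atBot :=
    tendsto_neg_atTop_atBot.comp h3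
  have := tendsto_atBot_add_nhds h4 hC
  refine this.congr fun μ => ?_
  rw [secular_eq_rest c lam β i μ, div_eq_mul_inv, ← neg_sub (lam i) μ, inv_neg]
  ring

lemma secular_tendsto_atBot {n : ℕ} (c : ℝ) (lam β : Fin n → ℝ) :
    Tendsto (secular c lam β) atBot atTop := by
  have h1 : Tendsto (fun μ : ℝ => c - μ) atBot atTop :=
    (tendsto_atTop_add_const_left atBot c tendsto_neg_atBot_atTop).congr fun μ => by ring
  have h2 : Tendsto (fun μ : ℝ => ∑ k, β k ^ 2 / (μ - lam k)) atBot (𝓝 0) := by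
    have : Tendsto (fun μ : ℝ => ∑ k : Fin n, β k ^ 2 / (μ - lam k)) atBot
        (𝓝 (∑ k : Fin n, (0:ℝ))) := by
      apply tendsto_finset_sum
      intro k _
      have hb : Tendsto (fun μ : ℝ => lam k - μ) atBot atTop :=
        (tendsto_atTop_add_const_left atBot (lam k) tendsto_neg_atBot_atTop).congr
          fun μ => by ring
      have hneg := (Filter.Tendsto.const_div_atTop hb (β k ^ 2)).neg
      rw [neg_zero] at hneg
      refine hneg.congr fun μ => ?_
      rw [← neg_sub μ (lam k), div_neg, neg_neg]
    simpa using this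
  exact (tendsto_atTop_add_nhds h1 h2).congr fun μ => rfl

lemma secular_tendsto_atTop {n : ℕ} (c : ℝ) (lam β : Fin n → ℝ) :
    Tendsto (secular c lam β) atTop atBot := by
  have h1 : Tendsto (fun μ : ℝ => c - μ) atTop atBot :=
    (tendsto_atBot_add_const_left atTop c tendsto_neg_atTop_atBot).congr fun μ => by ring
  have h2 : Tendsto (fun μ : ℝ => ∑ k, β k ^ 2 / (μ - lam k)) atTop (𝓝 0) := by
    have : Tendsto (fun μ : ℝ => ∑ k : Fin n, β k ^ 2 / (μ - lam k)) atTop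
        (𝓝 (∑ k : Fin n, (0:ℝ))) := by
      apply tendsto_finset_sum
      intro k _
      have hb : Tendsto (fun μ : ℝ => μ - lam k) atTop atTop :=
        (tendsto_atTop_add_const_right atTop (-lam k) tendsto_id).congr
          fun μ => by simp [sub_eq_add_neg]
      exact Filter.Tendsto.const_div_atTop hb (β k ^ 2)
    simpa using this
  exact (tendsto_atBot_add_nhds h1 h2).congr fun μ => rfl

lemma ivt_zero {f : ℝ → ℝ} {S : Set ℝ} (hc : ContinuousOn f S) {a b : ℝ} (hab : a ≤ b)
    (hsub : Icc a b ⊆ S) (hfa : 0 < f a) (hfb : f b < 0) : ∃ μ ∈ Icc a b, f μ = 0 := by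
  have h := intermediate_value_Icc' hab (hc.mono hsub)
  obtain ⟨μ, hμ, hv⟩ := h ⟨hfb.le, hfa.le⟩
  exact ⟨μ, hμ, hv⟩

lemma secular_root {n : ℕ} (hn : 0 < n) (c : ℝ) (lam β : Fin n → ℝ)
    (hm : StrictMono lam) (hβ : ∀ k, β k ≠ 0) (j : Fin (n + 1)) :
    ∃ μ, secular c lam β μ = 0 ∧ (∀ k, μ ≠ lam k) ∧
      ∀ k : Fin n, (k.castSucc < j → lam k < μ) ∧ (j ≤ k.castSucc → μ < lam k) := by
  have hinj := hm.injective
  have hcont := secular_continuousOn c lam β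
  by_cases h0 : (j : ℕ) = 0
  · -- leftmost interval
    set i0 : Fin n := ⟨0, hn⟩ with hi0
    have he1 := (secular_tendsto_atBot c lam β).eventually_gt_atTop 0
    have he2 : ∀ᶠ μ in (atBot : Filter ℝ), μ < lam i0 := eventually_lt_atBot (lam i0)
    obtain ⟨a, ha1, ha2⟩ := (he1.and he2).exists
    have hb1 := (secular_tendsto_left c lam β hinj i0 (hβ i0)).eventually_lt_atBot 0
    have hb2 : Ioo a (lam i0) ∈ 𝓝[<] (lam i0) := Ioo_mem_nhdsLT ha2
    obtain ⟨b, hbneg, hbmem⟩ := (hb1.and (eventually_of_mem hb2 fun x hx => hx)).exists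
    have hlt : ∀ μ ∈ Icc a b, ∀ k, μ < lam k := by
      intro μ hμ k
      have hik : lam i0 ≤ lam k := hm.monotone (by simp [hi0, Fin.le_def])
      exact lt_of_le_of_lt hμ.2 (lt_of_lt_of_le hbmem.2 hik)
    have hsub : Icc a b ⊆ {μ | ∀ k, μ ≠ lam k} := fun μ hμ k => ne_of_lt (hlt μ hμ k)
    obtain ⟨μ, hμmem, hμ0⟩ := ivt_zero hcont hbmem.1.le hsub ha1 hbneg
    refine ⟨μ, hμ0, hsub hμmem, fun k => ⟨fun hk => absurd hk (by simp [Fin.lt_def, h0]), 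
      fun _ => hlt μ hμmem k⟩⟩
  · by_cases h1 : (j : ℕ) = n
    · -- rightmost interval
      set i1 : Fin n := ⟨n - 1, by omega⟩ with hi1
      have ha1 := (secular_tendsto_right c lam β hinj i1 (hβ i1)).eventually_gt_atTop 0
      obtain ⟨a, haf, hamem⟩ := (ha1.and (eventually_of_mem self_mem_nhdsWithin (fun x hx => hx))).exists
      have hb1 := (secular_tendsto_atTop c lam β).eventually_lt_atBot 0
      have hb2 : ∀ᶠ μ in (atTop : Filter ℝ), a < μ := eventually_gt_atTop a
      obtain ⟨b, hbf, hbgt⟩ := (hb1.and hb2).exists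
      have hgt : ∀ μ ∈ Icc a b, ∀ k, lam k < μ := by
        intro μ hμ k
        have hik : lam k ≤ lam i1 := hm.monotone (by simp [hi1, Fin.le_def]; omega)
        exact lt_of_le_of_lt hik (lt_of_lt_of_le hamem hμ.1)
      have hsub : Icc a b ⊆ {μ | ∀ k, μ ≠ lam k} := fun μ hμ k => (ne_of_lt (hgt μ hμ k)).symm
      obtain ⟨μ, hμmem, hμ0⟩ := ivt_zero hcont hbgt.le hsub haf hbf
      refine ⟨μ, hμ0, hsub hμmem, fun k => ⟨fun _ => hgt μ hμmem k,
        fun hk => absurd hk (by simp only [Fin.le_def, Fin.coe_castSucc, h1]; omega)⟩⟩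
    · -- interior interval
      have hj1 : 1 ≤ (j : ℕ) := by omega
      have hjn : (j : ℕ) < n := by omega
      set i : Fin n := ⟨(j : ℕ) - 1, by omega⟩ with hi
      set i' : Fin n := ⟨(j : ℕ), hjn⟩ with hi'
      have hii' : lam i < lam i' := hm (Fin.lt_def.mpr (show (j : ℕ) - 1 < (j : ℕ) by omega))
      have ha1 := (secular_tendsto_right c lam β hinj i (hβ i)).eventually_gt_atTop 0
      have ha2 : Ioo (lam i) (lam i') ∈ 𝓝[>] (lam i) := Ioo_mem_nhdsGT hii'
      obtain ⟨a, haf, hamem⟩ := (ha1.and (eventually_of_mem ha2 (fun x hx => hx))).exists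
      have hb1 := (secular_tendsto_left c lam β hinj i' (hβ i')).eventually_lt_atBot 0
      have hb2 : Ioo a (lam i') ∈ 𝓝[<] (lam i') := Ioo_mem_nhdsLT hamem.2
      obtain ⟨b, hbf, hbmem⟩ := (hb1.and (eventually_of_mem hb2 (fun x hx => hx))).exists
      have hIoo : Icc a b ⊆ Ioo (lam i) (lam i') := fun μ hμ =>
        ⟨lt_of_lt_of_le hamem.1 hμ.1, lt_of_le_of_lt hμ.2 hbmem.2⟩
      have hsub : Icc a b ⊆ {μ | ∀ k, μ ≠ lam k} := by
        intro μ hμ k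
        obtain ⟨hμ1, hμ2⟩ := hIoo hμ
        rcases le_or_gt (k : ℕ) ((j : ℕ) - 1) with hk | hk
        · exact (ne_of_lt (lt_of_le_of_lt (hm.monotone (show k ≤ i by simp [hi, Fin.le_def]; omega)) hμ1)).symm
        · exact ne_of_lt (lt_of_lt_of_le hμ2 (hm.monotone (show i' ≤ k by simp [hi', Fin.le_def]; omega)))
      obtain ⟨μ, hμmem, hμ0⟩ := ivt_zero hcont hbmem.1.le hsub haf hbf
      obtain ⟨hμ1, hμ2⟩ := hIoo hμmem
      refine ⟨μ, hμ0, hsub hμmem, fun k => ⟨fun hk => ?_, fun hk => ?_⟩⟩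
      · have : k ≤ i := by
          simp only [Fin.lt_def, Fin.coe_castSucc] at hk
          simp [hi, Fin.le_def]; omega
        exact lt_of_le_of_lt (hm.monotone this) hμ1
      · have : i' ≤ k := by
          simp only [Fin.le_def, Fin.coe_castSucc] at hk
          simp [hi', Fin.le_def]; omega
        exact lt_of_lt_of_le hμ2 (hm.monotone this)

lemma ortho_expand {n : ℕ} (u : Fin n → Fin n → ℝ)
    (h : ∀ i j, u i ⬝ᵥ u j = if i = j then 1 else 0) (y : Fin n → ℝ) (i : Fin n) :
    y i = ∑ k, (u k ⬝ᵥ y) * u k i := by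
  set U : Matrix (Fin n) (Fin n) ℝ := Matrix.of u with hUdef
  have hU : U * Uᵀ = 1 := by
    ext a c
    have := h a c
    simpa [Matrix.mul_apply, dotProduct, Matrix.one_apply, hUdef] using this
  have hU' : Uᵀ * U = 1 := mul_eq_one_comm.mp hU
  have h2 : Uᵀ *ᵥ (U *ᵥ y) = y := by rw [Matrix.mulVec_mulVec, hU', Matrix.one_mulVec]
  conv_lhs => rw [← h2]
  simp only [Matrix.mulVec, dotProduct, Matrix.transpose_apply, hUdef, Matrix.of_apply]
  exact Finset.sum_congr rfl fun k _ => by ring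


theorem stmt_8 (n : ℕ) (hn : 0 < n)
    (B : Matrix (Fin n) (Fin n) ℝ) (hB : Bᵀ = B)
    (b : Fin n → ℝ) (c : ℝ)
    (A : Matrix (Fin (n + 1)) (Fin (n + 1)) ℝ)
    (hA11 : ∀ i j : Fin n, A i.castSucc j.castSucc = B i j)
    (hA12 : ∀ i : Fin n, A i.castSucc (Fin.last n) = b i)
    (hA21 : ∀ j : Fin n, A (Fin.last n) j.castSucc = b j)
    (hA22 : A (Fin.last n) (Fin.last n) = c)
    (lam : Fin n → ℝ) (hlam : StrictMono lam)
    (heig : ∀ i : Fin n, ∃ v : Fin n → ℝ, v ≠ 0 ∧ B *ᵥ v = lam i • v)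
    (hall : ∀ t : ℝ, (∃ v : Fin n → ℝ, v ≠ 0 ∧ B *ᵥ v = t • v) → ∃ i, t = lam i)
    (horth : ∀ v : Fin n → ℝ, v ≠ 0 → (∃ t : ℝ, B *ᵥ v = t • v) → v ⬝ᵥ b ≠ 0) :
    ∃ mu : Fin (n + 1) → ℝ, StrictMono mu ∧
      (∀ j : Fin (n + 1), ∃ w : Fin (n + 1) → ℝ, w ≠ 0 ∧ A *ᵥ w = mu j • w) ∧
      ∀ i : Fin n, mu i.castSucc < lam i ∧ lam i < mu i.succ := by
  classical
  choose v hv0 hvB using heig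
  have hsym : ∀ (x y : Fin n → ℝ), (B *ᵥ x) ⬝ᵥ y = x ⬝ᵥ (B *ᵥ y) := by
    intro x y
    rw [Matrix.dotProduct_mulVec, ← Matrix.mulVec_transpose, hB]
  have horthv : ∀ i j, i ≠ j → v i ⬝ᵥ v j = 0 := by
    intro i j hij
    have h1 : (B *ᵥ v i) ⬝ᵥ v j = lam i * (v i ⬝ᵥ v j) := by
      rw [hvB]; simp [smul_dotProduct, smul_eq_mul]
    have h2 : (B *ᵥ v i) ⬝ᵥ v j = lam j * (v i ⬝ᵥ v j) := by
      rw [hsym, hvB]; simp [dotProduct_smul, smul_eq_mul]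
    have h3 : (lam i - lam j) * (v i ⬝ᵥ v j) = 0 := by
      rw [sub_mul, h1.symm.trans h2, sub_self]
    rcases mul_eq_zero.mp h3 with h | h
    · exact absurd (sub_eq_zero.mp h) (hlam.injective.ne hij)
    · exact h
  have hvpos : ∀ i, 0 < v i ⬝ᵥ v i := by
    intro i
    refine lt_of_le_of_ne (Finset.sum_nonneg fun k _ => mul_self_nonneg _) ?_
    intro h
    exact hv0 i (dotProduct_self_eq_zero.mp h.symm)
  set u : Fin n → Fin n → ℝ := fun i => (Real.sqrt (v i ⬝ᵥ v i))⁻¹ • v i with hudef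
  have hsq : ∀ i, 0 < Real.sqrt (v i ⬝ᵥ v i) := fun i => Real.sqrt_pos.mpr (hvpos i)
  have huu : ∀ i j, u i ⬝ᵥ u j = if i = j then 1 else 0 := by
    intro i j
    by_cases hij : i = j
    · subst hij
      simp only [hudef, smul_dotProduct, dotProduct_smul, smul_eq_mul, if_pos rfl]
      rw [← mul_assoc]
      rw [show (Real.sqrt (v i ⬝ᵥ v i))⁻¹ * (Real.sqrt (v i ⬝ᵥ v i))⁻¹
          = ((Real.sqrt (v i ⬝ᵥ v i)) * (Real.sqrt (v i ⬝ᵥ v i)))⁻¹ by rw [mul_inv]]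
      rw [Real.mul_self_sqrt (hvpos i).le]
      exact inv_mul_cancel₀ (ne_of_gt (hvpos i))
    · simp only [hudef, smul_dotProduct, dotProduct_smul, smul_eq_mul, if_neg hij]
      rw [horthv i j hij]; ring
  have huB : ∀ i, B *ᵥ u i = lam i • u i := by
    intro i
    rw [hudef]
    simp only [Matrix.mulVec_smul, hvB]
    rw [smul_comm]
  have hu0 : ∀ i, u i ≠ 0 := by
    intro i h
    have := huu i i
    rw [h] at this
    simp at this
  set β : Fin n → ℝ := fun k => u k ⬝ᵥ b with hβdef
  have hβ : ∀ k, β k ≠ 0 := fun k => horth (u k) (hu0 k) ⟨lam k, huB k⟩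
  have hroot := fun j => secular_root hn c lam β hlam hβ j
  choose mu hmu0 hmune hmuord using hroot
  refine ⟨mu, ?_, ?_, ?_⟩
  · intro j j' hjj'
    have hjn : (j : ℕ) < n := by
      have := hjj'
      rw [Fin.lt_def] at this
      omega
    set k : Fin n := ⟨(j : ℕ), hjn⟩ with hk
    have h1 : mu j < lam k := (hmuord j k).2 (by simp [hk, Fin.le_def])
    have h2 : lam k < mu j' := (hmuord j' k).1 (by rw [Fin.lt_def]; simpa [hk] using hjj')
    exact h1.trans h2
  · intro j
    set μ := mu j with hμdef
    set x : Fin n → ℝ := fun i => ∑ k, (β k / (μ - lam k)) * u k i with hxdef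
    refine ⟨Fin.snoc x 1, ?_, ?_⟩
    · intro h
      have := congrFun h (Fin.last n)
      simp [Fin.snoc_last] at this
    · funext p
      induction p using Fin.lastCases with
      | last =>
        have hlhs : (A *ᵥ Fin.snoc x 1) (Fin.last n) = (∑ i, b i * x i) + c := by
          simp only [Matrix.mulVec, dotProduct]
          rw [Fin.sum_univ_castSucc]
          simp only [Fin.snoc_castSucc, Fin.snoc_last, hA22, mul_one]
          congr 1
          exact Finset.sum_congr rfl fun i _ => by rw [hA21 i]
        have hswap : ∑ i, b i * x i = ∑ k, β k ^ 2 / (μ - lam k) := by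
          simp only [hxdef, Finset.mul_sum]
          rw [Finset.sum_comm]
          refine Finset.sum_congr rfl fun k _ => ?_
          have : ∑ i, b i * ((β k / (μ - lam k)) * u k i)
              = (β k / (μ - lam k)) * (u k ⬝ᵥ b) := by
            simp only [dotProduct, Finset.mul_sum]
            exact Finset.sum_congr rfl fun i _ => by ring
          rw [this]
          have hb' : u k ⬝ᵥ b = β k := rfl
          rw [hb', sq]
          ring
        have hsec := hmu0 j
        unfold secular at hsec
        rw [hlhs]
        have hrhs : (μ • (Fin.snoc x 1 : Fin (n + 1) → ℝ)) (Fin.last n) = μ := by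
          simp [Fin.snoc_last]
        rw [hrhs, hswap]
        linarith
      | cast i =>
        have hlhs : (A *ᵥ Fin.snoc x 1) i.castSucc = (∑ k, B i k * x k) + b i := by
          simp only [Matrix.mulVec, dotProduct]
          rw [Fin.sum_univ_castSucc]
          simp only [Fin.snoc_castSucc, Fin.snoc_last, hA12, mul_one]
          congr 1
          exact Finset.sum_congr rfl fun k _ => by rw [hA11 i k]
        have hBu : ∀ k, ∑ q, B i q * u k q = lam k * u k i := by
          intro k
          have := congrFun (huB k) i
          simpa [Matrix.mulVec, dotProduct, smul_eq_mul] using this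
        have hBx : ∑ k, B i k * x k = ∑ k, (β k / (μ - lam k)) * (lam k * u k i) := by
          simp only [hxdef, Finset.mul_sum]
          rw [Finset.sum_comm]
          refine Finset.sum_congr rfl fun k _ => ?_
          have h5 : ∑ q, B i q * ((β k / (μ - lam k)) * u k q)
              = (β k / (μ - lam k)) * ∑ q, B i q * u k q := by
            rw [Finset.mul_sum]
            exact Finset.sum_congr rfl fun q _ => by ring
          rw [h5, hBu k]
        have hbexp := ortho_expand u huu b i
        have hrhs : (μ • (Fin.snoc x 1 : Fin (n + 1) → ℝ)) i.castSucc = μ * x i := by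
          simp [Fin.snoc_castSucc]
        have hxi : x i = ∑ k, (β k / (μ - lam k)) * u k i := rfl
        rw [hlhs, hrhs, hBx, hbexp, hxi, Finset.mul_sum, ← Finset.sum_add_distrib]
        refine Finset.sum_congr rfl fun k _ => ?_
        have hne : μ - lam k ≠ 0 := sub_ne_zero_of_ne (hmune j k)
        have hb' : u k ⬝ᵥ b = β k := rfl
        rw [hb']
        field_simp
        ring
  · intro i
    exact ⟨(hmuord i.castSucc i).2 (le_refl _), (hmuord i.succ i).1 Fin.castSucc_lt_succ⟩
end
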